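/- The second mutual-exclusion system (Example 2) violates non-starvation for process 1 even under fairness: there exist a fair event stream es and a position i such that the trace σ of es under step2 from initial state (T,T) has first component (σ i).1 = W and (σ j).1 ≠ U for all j ≥ i. In fact, for every event stream es with es 0 = Request1 and es 1 = Request2 (and fair such streams exist), σ j = (W,W) for all j ≥ 2. -/
import Mathlib


inductive ProcState : Type where
  | T | W | U
deriving DecidableEq

inductive Event : Type where
  | request1 | request2 | take1 | take2 | release1 | release2
deriving DecidableEq

/-- The trace of an event stream under a transition function from an initial state. -/
def trace {S : Type} (step : Event → S → S) (s0 : S) (es : ℕ → Event) : ℕ → S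
  | 0 => s0
  | n + 1 => step (es n) (trace step s0 es n)

/-- An event stream is fair if every event occurs infinitely often. -/
def Fair (es : ℕ → Event) : Prop := ∀ (e : Event) (n : ℕ), ∃ m, n ≤ m ∧ es m = e

/-- Transition function of Example 2. -/
def step2 : Event → ProcState × ProcState → ProcState × ProcState
  | .request1, (s1, s2) => if s1 = ProcState.T then (.W, s2) else (s1, s2)
  | .request2, (s1, s2) => if s2 = ProcState.T then (s1, .W) else (s1, s2)
  | .take1, (s1, s2) => if s1 = ProcState.W ∧ s2 = ProcState.T then (.U, s2) else (s1, s2)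
  | .take2, (s1, s2) => if s2 = ProcState.W ∧ s1 = ProcState.T then (s1, .U) else (s1, s2)
  | .release1, (s1, s2) => if s1 = ProcState.U then (.T, s2) else (s1, s2)
  | .release2, (s1, s2) => if s2 = ProcState.U then (s1, .T) else (s1, s2)

def esFair : ℕ → Event := fun n =>
  match n % 6 with
  | 0 => Event.request1
  | 1 => Event.request2
  | 2 => Event.take1
  | 3 => Event.take2
  | 4 => Event.release1
  | _ => Event.release2

lemma esFair_fair : Fair esFair := by
  intro e n
  have mod : ∀ k : ℕ, (6 * n + k) % 6 = k % 6 := fun k => Nat.mul_add_mod 6 n k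
  cases e
  · exact ⟨6 * n + 0, by omega, by simp [esFair, mod]⟩
  · exact ⟨6 * n + 1, by omega, by simp [esFair, mod]⟩
  · exact ⟨6 * n + 2, by omega, by simp [esFair, mod]⟩
  · exact ⟨6 * n + 3, by omega, by simp [esFair, mod]⟩
  · exact ⟨6 * n + 4, by omega, by simp [esFair, mod]⟩
  · exact ⟨6 * n + 5, by omega, by simp [esFair, mod]⟩

lemma ww_fixed (e : Event) : step2 e (ProcState.W, ProcState.W) = (ProcState.W, ProcState.W) := by
  cases e <;> simp [step2]

lemma deadlock (es : ℕ → Event) (h0 : es 0 = Event.request1) (h1 : es 1 = Event.request2) :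
    ∀ j, 2 ≤ j → trace step2 (ProcState.T, ProcState.T) es j = (ProcState.W, ProcState.W) := by
  have h2 : trace step2 (ProcState.T, ProcState.T) es 2 = (ProcState.W, ProcState.W) := by
    simp [trace, h0, h1, step2]
  intro j hj
  induction j with
  | zero => omega
  | succ k ih =>
    rcases Nat.lt_or_ge k 2 with hk | hk
    · interval_cases k
      · omega
      · exact h2
    · rw [trace, ih hk, ww_fixed]

/-- Example 2 violates non-starvation for process 1 even under fairness: there is a
fair event stream and a position where process 1 is waiting but never gets to use
the critical resource.  In fact any stream starting `Request1, Request2` deadlocks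
in `(W, W)` from position `2` onwards, and fair such streams exist. -/
theorem example2_violates_non_starvation :
    (∃ es : ℕ → Event, Fair es ∧ ∃ i : ℕ,
      (trace step2 (ProcState.T, ProcState.T) es i).1 = ProcState.W ∧
      ∀ j, i ≤ j → (trace step2 (ProcState.T, ProcState.T) es j).1 ≠ ProcState.U) ∧
    (∀ es : ℕ → Event, es 0 = Event.request1 → es 1 = Event.request2 →
      ∀ j, 2 ≤ j →
        trace step2 (ProcState.T, ProcState.T) es j = (ProcState.W, ProcState.W)) ∧
    (∃ es : ℕ → Event, Fair es ∧ es 0 = Event.request1 ∧ es 1 = Event.request2) := by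
  have hf : Fair esFair := esFair_fair
  have h0 : esFair 0 = Event.request1 := rfl
  have h1 : esFair 1 = Event.request2 := rfl
  refine ⟨⟨esFair, hf, 2, ?_, ?_⟩, deadlock, ⟨esFair, hf, h0, h1⟩⟩
  · rw [deadlock esFair h0 h1 2 le_rfl]
  · intro j hj
    rw [deadlock esFair h0 h1 j hj]
    simp
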